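/- Let X be a metric space, n ≥ 2, and p : Fin n → X a family of points, with nearest-neighbor distances δ i = min over j ≠ i of dist (p i) (p j). Let σ be a derangement of Fin n attaining the minimum of ∑_i dist (p i) (p (σ i)) over all derangements. Then for every index i, dist (p i) (p (σ i)) ≤ δ i + δ (σ i). (Each edge of a minimum cycle cover of the complete geometric graph belongs to the nearest-neighbor overlap graph.) -/

import Mathlib

private lemma cycle_nonneg {X : Type*} [MetricSpace X] {n : ℕ} (p : Fin n → X)
    (σ : Equiv.Perm (Fin n)) (hσ : ∀ i, σ i ≠ i)
    (hσmin : ∀ σ' : Equiv.Perm (Fin n), (∀ i, σ' i ≠ i) →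
      ∑ i, dist (p i) (p (σ i)) ≤ ∑ i, dist (p i) (p (σ' i)))
    {m : ℕ} [NeZero m] (g : Fin m → Fin n) (hinj : Function.Injective g)
    (hadm : ∀ i : Fin m, g (i+1) ≠ g i ∧ σ (g i) ≠ g (i+1)) :
    0 ≤ ∑ i : Fin m,
      (dist (p (g (i+1))) (p (σ (g i))) - dist (p (g (i+1))) (p (σ (g (i+1))))) := by
  classical
  set l : List (Fin n) := List.ofFn g with hl
  have hlen : l.length = m := List.length_ofFn (f := g)
  have hnd : l.Nodup := List.nodup_ofFn.mpr hinj
  set τ : Equiv.Perm (Fin n) := l.formPerm with hτ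
  have hmem : ∀ x, x ∈ l ↔ ∃ i, g i = x := by
    intro x; simp [hl, List.mem_ofFn, Set.mem_range, eq_comm]
  have hget : ∀ i : Fin m, l[(i : ℕ)]'(by rw [hlen]; exact i.isLt) = g i := by
    intro i; simp [hl]
  have hτg : ∀ i : Fin m, τ (g i) = g (i + 1) := by
    intro i
    have h2 := List.formPerm_apply_getElem l hnd (i : ℕ) (by rw [hlen]; exact i.isLt)
    rw [hget i] at h2
    rw [hτ, h2]
    have h4 : l[((i : ℕ) + 1) % l.length]'(Nat.mod_lt _ (by rw [hlen]; exact Nat.pos_of_ne_zero (NeZero.ne m))) =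
        l[((i + 1 : Fin m) : ℕ)]'(by rw [hlen]; exact (i+1).isLt) := by
      congr 1
      rw [hlen, Fin.add_def]; simp
    rw [h4, hget (i+1)]
  have hτfix : ∀ x, (∀ i, g i ≠ x) → τ x = x := by
    intro x hx
    apply List.formPerm_apply_of_notMem
    rw [hmem]; push_neg; exact fun i => hx i
  -- the modified permutation
  set σ' : Equiv.Perm (Fin n) := σ * τ⁻¹ with hσ'
  have happ : ∀ i : Fin m, σ' (g (i+1)) = σ (g i) := by
    intro i
    have : τ⁻¹ (g (i+1)) = g i := by
      rw [← hτg i]; exact Equiv.symm_apply_apply τ (g i)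
    rw [hσ', Equiv.Perm.mul_apply, this]
  have happfix : ∀ x, (∀ i, g i ≠ x) → σ' x = σ x := by
    intro x hx
    have h1 : τ x = x := hτfix x hx
    have : τ⁻¹ x = x := by
      conv_lhs => rw [← h1]
      exact Equiv.symm_apply_apply τ x
    rw [hσ', Equiv.Perm.mul_apply, this]
  have hder : ∀ x, σ' x ≠ x := by
    intro x
    by_cases hx : ∃ i, g i = x
    · obtain ⟨i, rfl⟩ := hx
      have hi : g i = g ((i - 1) + 1) := by rw [sub_add_cancel]
      rw [hi, happ (i-1)]
      exact (hadm (i-1)).2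
    · push_neg at hx
      rw [happfix x hx]; exact hσ x
  have hmin := hσmin σ' hder
  -- rewrite RHS cost by reindexing with τ
  have hsum1 : ∑ i, dist (p i) (p (σ' i)) = ∑ i, dist (p (τ i)) (p (σ i)) := by
    rw [← Equiv.sum_comp τ (fun i => dist (p i) (p (σ' i)))]
    apply Finset.sum_congr rfl
    intro i _
    congr 2
    simp [hσ']
  -- difference is supported on range g
  have key : ∑ i, dist (p i) (p (σ' i)) - ∑ i, dist (p i) (p (σ i))
      = ∑ i : Fin m, (dist (p (g (i+1))) (p (σ (g i))) - dist (p (g i)) (p (σ (g i)))) := by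
    rw [hsum1, ← Finset.sum_sub_distrib]
    have hsub : (Finset.univ.image g) ⊆ Finset.univ := Finset.subset_univ _
    rw [← Finset.sum_subset hsub]
    · rw [Finset.sum_image (fun a _ b _ h => hinj h)]
      apply Finset.sum_congr rfl
      intro i _
      rw [hτg i]
    · intro x _ hx
      have hx' : ∀ i, g i ≠ x := by
        intro i hgi; exact hx (Finset.mem_image.mpr ⟨i, Finset.mem_univ _, hgi⟩)
      rw [hτfix x hx']
      ring
  -- final: telescoping of the subtracted terms
  have shift : ∑ i : Fin m, dist (p (g (i+1))) (p (σ (g (i+1))))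
      = ∑ i : Fin m, dist (p (g i)) (p (σ (g i))) := by
    exact Equiv.sum_comp (Equiv.addRight (1 : Fin m)) (fun j => dist (p (g j)) (p (σ (g j))))
  have h0 : 0 ≤ ∑ i, dist (p i) (p (σ' i)) - ∑ i, dist (p i) (p (σ i)) := by linarith
  rw [key] at h0
  calc (0:ℝ) ≤ ∑ i : Fin m, (dist (p (g (i+1))) (p (σ (g i))) - dist (p (g i)) (p (σ (g i)))) := h0
    _ = ∑ i : Fin m, (dist (p (g (i+1))) (p (σ (g i))) - dist (p (g (i+1))) (p (σ (g (i+1))))) := by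
        rw [Finset.sum_sub_distrib, Finset.sum_sub_distrib, shift]


private lemma exists_phi {X : Type*} [MetricSpace X] {n : ℕ} (p : Fin n → X)
    (σ : Equiv.Perm (Fin n)) (hσ : ∀ i, σ i ≠ i)
    (hσmin : ∀ σ' : Equiv.Perm (Fin n), (∀ i, σ' i ≠ i) →
      ∑ i, dist (p i) (p (σ i)) ≤ ∑ i, dist (p i) (p (σ' i)))
    (a w : Fin n) (hw1 : w ≠ a) (hw2 : w ≠ σ a) :
    ∃ φ : Fin n → ℝ, φ a = 0 ∧ ∀ r r' : Fin n, r' ≠ r → σ r ≠ r' →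
      φ r' ≤ φ r + (dist (p r') (p (σ r)) - dist (p r') (p (σ r'))) := by
  classical
  have hσa : σ a ≠ a := hσ a
  have hn3 : 3 ≤ n := by
    have h3 : ({a, σ a, w} : Finset (Fin n)).card = 3 := by
      rw [Finset.card_insert_of_notMem (by simp [Ne.symm hσa, Ne.symm hw1]),
        Finset.card_insert_of_notMem (by simp [Ne.symm hw2]), Finset.card_singleton]
    have h4 := Finset.card_le_univ ({a, σ a, w} : Finset (Fin n))
    rw [h3] at h4
    simpa using h4
  have hn0 : 0 < n := by omega
  set W : Fin n → Fin n → ℝ :=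
    fun r r' => dist (p r') (p (σ r)) - dist (p r') (p (σ r')) with hW
  set gg : (Fin n × (Fin n → Fin n)) → ℕ → Fin n :=
    fun q i => q.2 ⟨i % n, Nat.mod_lt _ hn0⟩ with hgg
  have hgg' : ∀ q (i : ℕ), i < n → gg q i = q.2 ⟨i % n, Nat.mod_lt _ hn0⟩ := by
    intro q i _; rfl
  set OK : Fin n → (Fin n × (Fin n → Fin n)) → Prop := fun r q =>
    gg q 0 = a ∧ gg q (q.1 : ℕ) = r ∧
    (∀ i j : ℕ, i ≤ (q.1 : ℕ) → j ≤ (q.1 : ℕ) → gg q i = gg q j → i = j) ∧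
    (∀ i : ℕ, i < (q.1 : ℕ) → gg q (i+1) ≠ gg q i ∧ σ (gg q i) ≠ gg q (i+1)) with hOK
  set pc : (Fin n × (Fin n → Fin n)) → ℝ :=
    fun q => ∑ i ∈ Finset.range (q.1 : ℕ), W (gg q i) (gg q (i+1)) with hpc
  set S : Fin n → Finset ℝ := fun r => (Finset.univ.filter (OK r)).image pc with hS
  have hmemS : ∀ r (q : Fin n × (Fin n → Fin n)), OK r q → pc q ∈ S r := by
    intro r q hq
    exact Finset.mem_image_of_mem _ (Finset.mem_filter.mpr ⟨Finset.mem_univ _, hq⟩)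
  have hne : ∀ r, (S r).Nonempty := by
    intro r
    rcases eq_or_ne r a with rfl | hra
    · set qq : Fin n × (Fin n → Fin n) := (⟨0, hn0⟩, fun _ => r) with hqq
      have e : ∀ t : ℕ, gg qq t = r := fun t => rfl
      exact ⟨_, hmemS r qq ⟨e 0, e 0,
        by intro i j hi hj _; simp only [hqq] at hi hj; omega,
        by intro i hi; simp only [hqq] at hi; omega⟩⟩
    · rcases eq_or_ne r (σ a) with rfl | hrb
      · set qq : Fin n × (Fin n → Fin n) := (⟨2, by omega⟩, fun i =>
          if (i : ℕ) = 0 then a else if (i : ℕ) = 1 then w else σ a) with hqq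
        have e : ∀ t : ℕ, t < n →
            gg qq t = (if t % n = 0 then a else if t % n = 1 then w else σ a) := by
          intro t ht; rfl
        have e0 : gg qq 0 = a := by rw [e 0 hn0]; norm_num
        have e1 : gg qq 1 = w := by rw [e 1 (by omega)]; rw [Nat.mod_eq_of_lt (by omega)]; norm_num
        have e2 : gg qq 2 = σ a := by rw [e 2 (by omega)]; rw [Nat.mod_eq_of_lt (by omega)]; norm_num
        refine ⟨_, hmemS _ qq ⟨e0, ?_, ?_, ?_⟩⟩
        · show gg qq 2 = σ a
          exact e2
        · intro i j hi hj hij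
          show i = j
          simp only [hqq] at hi hj
          interval_cases i <;> interval_cases j <;>
            first
            | rfl
            | (rw [e0, e1] at hij; exact absurd hij (Ne.symm hw1))
            | (rw [e1, e0] at hij; exact absurd hij hw1)
            | (rw [e0, e2] at hij; exact absurd hij (Ne.symm hσa))
            | (rw [e2, e0] at hij; exact absurd hij hσa)
            | (rw [e1, e2] at hij; exact absurd hij hw2)
            | (rw [e2, e1] at hij; exact absurd hij (Ne.symm hw2))
        · intro i hi
          simp only [hqq] at hi
          interval_cases i
          · rw [e0, e1]
            exact ⟨hw1, Ne.symm hw2⟩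
          · rw [e1, e2]
            exact ⟨Ne.symm hw2, fun hc => hw1 (σ.injective hc)⟩
      · set qq : Fin n × (Fin n → Fin n) := (⟨1, by omega⟩, fun i =>
          if (i : ℕ) = 0 then a else r) with hqq
        have e : ∀ t : ℕ, t < n → gg qq t = (if t % n = 0 then a else r) := by
          intro t ht; rfl
        have e0 : gg qq 0 = a := by rw [e 0 hn0]; norm_num
        have e1 : gg qq 1 = r := by rw [e 1 (by omega)]; rw [Nat.mod_eq_of_lt (by omega)]; norm_num
        refine ⟨_, hmemS _ qq ⟨e0, e1, ?_, ?_⟩⟩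
        · intro i j hi hj hij
          show i = j
          simp only [hqq] at hi hj
          interval_cases i <;> interval_cases j <;>
            first
            | rfl
            | (rw [e0, e1] at hij; exact absurd hij (Ne.symm hra))
            | (rw [e1, e0] at hij; exact absurd hij hra)
        · intro i hi
          simp only [hqq] at hi
          interval_cases i
          rw [e0, e1]
          exact ⟨hra, Ne.symm hrb⟩
  set φ : Fin n → ℝ := fun r => (S r).min' (hne r) with hφ
  have hφle : ∀ r q, OK r q → φ r ≤ pc q := fun r q h => Finset.min'_le _ _ (hmemS r q h)
  have hφmem : ∀ r, ∃ q, OK r q ∧ pc q = φ r := by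
    intro r
    have hmm := (S r).min'_mem (hne r)
    simp only [hS] at hmm
    obtain ⟨q, hq, he⟩ := Finset.mem_image.mp hmm
    exact ⟨q, (Finset.mem_filter.mp hq).2, he⟩
  have hφa : φ a = 0 := by
    apply le_antisymm
    · have h0 : OK a (⟨0, hn0⟩, fun _ => a) :=
        ⟨rfl, rfl, by intro i j hi hj _; simp only at hi hj; omega,
          by intro i hi; simp only at hi; omega⟩
      have := hφle a _ h0
      simpa [hpc] using this
    · apply Finset.le_min'
      intro y hy
      rw [hS] at hy
      obtain ⟨q, hq, he⟩ := Finset.mem_image.mp hy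
      obtain ⟨h0, hk, hinj, _⟩ := (Finset.mem_filter.mp hq).2
      have hk0 : (0 : ℕ) = (q.1 : ℕ) := hinj 0 (q.1 : ℕ) (by omega) le_rfl (h0.trans hk.symm)
      rw [← he, hpc]
      simp [← hk0]
  refine ⟨φ, hφa, ?_⟩
  intro r r' hr1 hr2
  show φ r' ≤ φ r + W r r'
  obtain ⟨q, hq, hpcq⟩ := hφmem r
  obtain ⟨h0, hkr, hinj, hadm⟩ := hq
  set k : ℕ := (q.1 : ℕ) with hk
  have hkn : k < n := q.1.isLt
  by_cases hex : ∃ j, j ≤ k ∧ gg q j = r'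
  · -- truncation case
    obtain ⟨j, hj, hgj⟩ := hex
    have hjk : j < k := by
      rcases lt_or_eq_of_le hj with h | h
      · exact h
      · exfalso; apply hr1; rw [← hgj, h, hkr]
    set q' : Fin n × (Fin n → Fin n) := (⟨j, by omega⟩, q.2) with hq'
    have hggq' : ∀ i : ℕ, gg q' i = gg q i := fun i => rfl
    have hq'1 : (q'.1 : ℕ) = j := rfl
    have hOK' : OK r' q' := by
      refine ⟨h0, hgj, ?_, ?_⟩
      · intro i i' hi hi' hii
        rw [hq'1] at hi hi'
        exact hinj i i' (by omega) (by omega) hii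
      · intro i hi
        rw [hq'1] at hi
        exact hadm i (by omega)
    have h1 : φ r' ≤ pc q' := hφle _ _ hOK'
    set kk : ℕ := k - j with hkk
    haveI : NeZero (kk + 1) := ⟨by omega⟩
    set g : Fin (kk + 1) → Fin n := fun t => gg q (j + (t : ℕ)) with hgdef
    have hginj : Function.Injective g := by
      intro t t' htt
      have := hinj (j + (t : ℕ)) (j + (t' : ℕ)) (by have := t.isLt; omega)
        (by have := t'.isLt; omega) htt
      exact Fin.ext (by omega)
    have hlastval : ((Fin.last kk : Fin (kk+1)) : ℕ) = kk := rfl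
    have hgadm : ∀ t : Fin (kk+1), g (t+1) ≠ g t ∧ σ (g t) ≠ g (t+1) := by
      intro t
      rcases lt_or_eq_of_le (Nat.lt_succ_iff.mp t.isLt) with ht | ht
      · have hv : ((t + 1 : Fin (kk+1)) : ℕ) = (t : ℕ) + 1 := by
          have : t < Fin.last kk := by
            rw [Fin.lt_iff_val_lt_val, hlastval]; exact ht
          exact Fin.val_add_one_of_lt this
        have e1 : g (t + 1) = gg q ((j + (t : ℕ)) + 1) := by
          rw [hgdef]; simp only [hv, ← Nat.add_assoc]
        have e2 : g t = gg q (j + (t : ℕ)) := rfl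
        have := hadm (j + (t : ℕ)) (by omega)
        rw [e1, e2]
        exact ⟨this.1, this.2⟩
      · -- t = last, wrap around
        have htl : t = Fin.last kk := Fin.ext (by rw [hlastval]; exact ht)
        have hv : (t + 1 : Fin (kk+1)) = 0 := by rw [htl]; exact Fin.last_add_one kk
        have e1 : g (t + 1) = r' := by rw [hv, hgdef]; simp only [Fin.val_zero, Nat.add_zero]; exact hgj
        have e2 : g t = r := by
          rw [hgdef]; simp only [ht]
          have : j + kk = k := by omega
          rw [this]; exact hkr
        rw [e1, e2]
        exact ⟨hr1, hr2⟩
    have hcyc := cycle_nonneg p σ hσ hσmin g hginj hgadm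
    have hcyc' : 0 ≤ ∑ t : Fin (kk+1), W (g t) (g (t+1)) := hcyc
    -- split off the last term
    have hsplit : ∑ t : Fin (kk+1), W (g t) (g (t+1))
        = (∑ t : Fin kk, W (g t.castSucc) (g (t.castSucc+1))) + W r r' := by
      rw [Fin.sum_univ_castSucc]
      congr 1
      have e2 : g (Fin.last kk) = r := by
        rw [hgdef]; simp only [hlastval]
        have : j + kk = k := by omega
        rw [this]; exact hkr
      have e1 : g (Fin.last kk + 1) = r' := by
        rw [Fin.last_add_one, hgdef]; simp only [Fin.val_zero, Nat.add_zero]; exact hgj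
      rw [e1, e2]
    have hbody : ∀ t : Fin kk, W (g t.castSucc) (g (t.castSucc+1))
        = W (gg q (j + (t : ℕ))) (gg q (j + (t : ℕ) + 1)) := by
      intro t
      have hcv : ((t.castSucc : Fin (kk+1)) : ℕ) = (t : ℕ) := rfl
      have hlt : t.castSucc < Fin.last kk := by
        rw [Fin.lt_iff_val_lt_val, hlastval, hcv]; exact t.isLt
      have hv : ((t.castSucc + 1 : Fin (kk+1)) : ℕ) = (t : ℕ) + 1 := by
        rw [Fin.val_add_one_of_lt hlt]; rfl
      rw [hgdef]
      simp only [hv, hcv, ← Nat.add_assoc]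
    -- identify with sum over Ico j k
    have hIco : ∑ i ∈ Finset.Ico j k, W (gg q i) (gg q (i+1))
        = ∑ t : Fin kk, W (g t.castSucc) (g (t.castSucc+1)) := by
      rw [Finset.sum_Ico_eq_sum_range]
      have : k - j = kk := rfl
      rw [this]
      rw [← Fin.sum_univ_eq_sum_range (fun i => W (gg q (j + i)) (gg q (j + i + 1))) kk]
      apply Finset.sum_congr rfl
      intro t _
      rw [hbody t]
    have hdecomp : pc q = pc q' + ∑ i ∈ Finset.Ico j k, W (gg q i) (gg q (i+1)) := by
      rw [hpc]
      simp only [hq']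
      rw [← Finset.sum_range_add_sum_Ico _ (le_of_lt hjk)]
    have : 0 ≤ (∑ i ∈ Finset.Ico j k, W (gg q i) (gg q (i+1))) + W r r' := by
      rw [hIco]; rw [hsplit] at hcyc'; linarith
    linarith [h1, hdecomp, hpcq, this]
  · -- extension case
    push_neg at hex
    have hk1n : k + 1 < n := by
      have hcard : k + 2 ≤ n := by
        set h : Fin (k+2) → Fin n := fun t => if (t : ℕ) ≤ k then gg q (t : ℕ) else r' with hh
        have hinj2 : Function.Injective h := by
          intro t t' htt
          rw [hh] at htt
          simp only at htt
          by_cases h1 : (t : ℕ) ≤ k <;> by_cases h2 : (t' : ℕ) ≤ k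
          · rw [if_pos h1, if_pos h2] at htt
            exact Fin.ext (hinj _ _ h1 h2 htt)
          · rw [if_pos h1, if_neg h2] at htt
            exact absurd htt (hex _ h1)
          · rw [if_neg h1, if_pos h2] at htt
            exact absurd htt.symm (hex _ h2)
          · have := t.isLt; have := t'.isLt
            exact Fin.ext (by omega)
        have := Fintype.card_le_of_injective h hinj2
        simpa using this
      omega
    set q' : Fin n × (Fin n → Fin n) := (⟨k+1, hk1n⟩,
      fun i : Fin n => if (i : ℕ) = k + 1 then r' else q.2 i) with hq'
    have hggq' : ∀ i : ℕ, i ≤ k → gg q' i = gg q i := by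
      intro i hik
      have him : i % n = i := Nat.mod_eq_of_lt (by omega)
      show (if ((⟨i % n, _⟩ : Fin n) : ℕ) = k + 1 then r' else q.2 ⟨i % n, _⟩) = _
      rw [if_neg (by simp only [him]; omega)]
    have hq'1 : (q'.1 : ℕ) = k + 1 := rfl
    have hggk1 : gg q' (k+1) = r' := by
      have him : (k+1) % n = k+1 := Nat.mod_eq_of_lt hk1n
      show (if ((⟨(k+1) % n, _⟩ : Fin n) : ℕ) = k + 1 then r' else q.2 ⟨(k+1) % n, _⟩) = r'
      rw [if_pos (by simp only [him])]
    have hOK' : OK r' q' := by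
      refine ⟨by rw [hggq' 0 (by omega)]; exact h0, hggk1, ?_, ?_⟩
      · intro i i' hi hi' hii
        rw [hq'1] at hi hi'
        show i = i'
        by_cases h1 : i ≤ k <;> by_cases h2 : i' ≤ k
        · rw [hggq' i h1, hggq' i' h2] at hii
          exact hinj _ _ h1 h2 hii
        · have h2' : i' = k + 1 := by omega
          rw [hggq' i h1, h2', hggk1] at hii
          exact absurd hii (hex _ h1)
        · have h1' : i = k + 1 := by omega
          rw [h1', hggk1, hggq' i' h2] at hii
          exact absurd hii.symm (hex _ h2)
        · omega
      · intro i hi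
        rw [hq'1] at hi
        show gg q' (i+1) ≠ gg q' i ∧ σ (gg q' i) ≠ gg q' (i+1)
        rcases lt_or_eq_of_le (Nat.lt_succ_iff.mp hi) with h1 | h1
        · rw [hggq' i (by omega), hggq' (i+1) (by omega)]
          exact hadm i h1
        · rw [h1, hggk1, hggq' k le_rfl, hkr]
          exact ⟨hr1, hr2⟩
    have hpcq' : pc q' = pc q + W r r' := by
      rw [hpc]
      show ∑ i ∈ Finset.range (k+1), W (gg q' i) (gg q' (i+1)) = _
      rw [Finset.sum_range_succ]
      congr 1
      · apply Finset.sum_congr rfl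
        intro i hi
        rw [Finset.mem_range] at hi
        rw [hggq' i (by omega), hggq' (i+1) (by omega)]
      · rw [hggq' k le_rfl, hggk1, hkr]
    have h1 : φ r' ≤ pc q' := hφle _ _ hOK'
    linarith [hpcq, hpcq', h1]



/-- Each edge of a minimum cycle cover of the complete geometric graph belongs
to the nearest-neighbor overlap graph: along a minimum-weight derangement `σ`,
the distance between consecutive points is at most the sum of their
nearest-neighbor distances. -/
theorem min_cycle_cover_edges_in_nearest_neighbor_graph
    {X : Type*} [MetricSpace X] (n : ℕ) (hn : 2 ≤ n) (p : Fin n → X)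
    (δ : Fin n → ℝ)
    (hδle : ∀ i, ∀ j, j ≠ i → δ i ≤ dist (p i) (p j))
    (hδmem : ∀ i, ∃ j, j ≠ i ∧ δ i = dist (p i) (p j))
    (σ : Equiv.Perm (Fin n)) (hσ : ∀ i, σ i ≠ i)
    (hσmin : ∀ σ' : Equiv.Perm (Fin n), (∀ i, σ' i ≠ i) →
      ∑ i, dist (p i) (p (σ i)) ≤ ∑ i, dist (p i) (p (σ' i))) :
    ∀ i, dist (p i) (p (σ i)) ≤ δ i + δ (σ i) := by
  intro a
  obtain ⟨u, hu_ne, hu⟩ := hδmem a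
  obtain ⟨v, hv_ne, hv⟩ := hδmem (σ a)
  by_cases hub : u = σ a
  · -- trivial case: δ a = d
    have h0 : (0:ℝ) ≤ δ (σ a) := by
      rw [hv]; exact dist_nonneg
    rw [hu, hub]
    linarith
  by_cases hva : v = a
  · -- trivial case: δ b = d
    have h0 : (0:ℝ) ≤ δ a := by
      rw [hu]; exact dist_nonneg
    rw [hv, hva]
    have hc : dist (p (σ a)) (p a) = dist (p a) (p (σ a)) := dist_comm _ _
    linarith
  -- main case
  obtain ⟨φ, hφa, hrel⟩ := exists_phi p σ hσ hσmin a u hu_ne hub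
  set x : Fin n := σ⁻¹ u with hxdef
  set a0 : Fin n := σ⁻¹ a with ha0def
  have hσx : σ x = u := Equiv.apply_symm_apply σ u
  have hσa0 : σ a0 = a := Equiv.apply_symm_apply σ a
  have hxa : x ≠ a := by
    intro h; apply hub; rw [← hσx, h]
  have hxa0 : x ≠ a0 := by
    intro h; apply hu_ne; rw [← hσx, h, hσa0]
  -- the global tightness function
  set F : Fin n → ℝ := fun i =>
    (φ (σ⁻¹ i) + dist (p (σ i)) (p i)) - (φ (σ i) + dist (p (σ i)) (p (σ (σ i)))) with hFdef
  have hF0 : ∀ i, 0 ≤ F i := by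
    intro i
    by_cases hcase : σ i = σ⁻¹ i
    · have h2 : σ (σ i) = i := by
        rw [hcase]; exact Equiv.apply_symm_apply σ i
      simp only [hFdef, ← hcase, h2]
      ring_nf
      exact le_refl 0
    · have harc := hrel (σ⁻¹ i) (σ i) hcase
        (by rw [show σ (σ⁻¹ i) = i from Equiv.apply_symm_apply σ i]; exact Ne.symm (hσ i))
      rw [show σ (σ⁻¹ i) = i from Equiv.apply_symm_apply σ i] at harc
      simp only [hFdef]
      linarith
  have hsum : ∑ i, F i = 0 := by
    simp only [hFdef]
    rw [Finset.sum_sub_distrib, Finset.sum_add_distrib, Finset.sum_add_distrib]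
    have e1 : ∑ i, φ (σ⁻¹ i) = ∑ i, φ (σ i) := by
      rw [Equiv.sum_comp (σ⁻¹ : Equiv.Perm (Fin n)) φ, Equiv.sum_comp (σ : Equiv.Perm (Fin n)) φ]
    have e2 : ∑ i, dist (p (σ i)) (p i) = ∑ i, dist (p (σ i)) (p (σ (σ i))) := by
      have e3 : ∑ i, dist (p (σ i)) (p (σ (σ i)))
          = ∑ i, dist (p i) (p (σ i)) :=
        Equiv.sum_comp (σ : Equiv.Perm (Fin n)) (fun j => dist (p j) (p (σ j)))
      rw [e3]
      apply Finset.sum_congr rfl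
      intro i _
      exact dist_comm _ _
    rw [e1, e2]
    ring
  have hFa : F a = 0 := by
    have := (Finset.sum_eq_zero_iff_of_nonneg (fun i _ => hF0 i)).mp hsum
    exact this a (Finset.mem_univ a)
  have hEa : φ a0 + dist (p (σ a)) (p a) = φ (σ a) + dist (p (σ a)) (p (σ (σ a))) := by
    have h := hFa
    simp only [hFdef] at h
    rw [← ha0def] at h
    linarith
  -- relaxation chains
  have h1 : φ x ≤ φ a0 + (dist (p x) (p a) - dist (p x) (p u)) := by
    have := hrel a0 x hxa0 (by rw [hσa0]; exact Ne.symm hxa)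
    rwa [hσa0, hσx] at this
  have h2 : φ a ≤ φ x + (dist (p a) (p u) - dist (p a) (p (σ a))) := by
    have := hrel x a (Ne.symm hxa) (by rw [hσx]; exact hu_ne)
    rwa [hσx] at this
  have h3 : φ v ≤ φ a + (dist (p v) (p (σ a)) - dist (p v) (p (σ v))) := by
    exact hrel a v hva (Ne.symm hv_ne)
  have h4 : φ (σ a) ≤ φ v + (dist (p (σ a)) (p (σ v)) - dist (p (σ a)) (p (σ (σ a)))) := by
    apply hrel v (σ a) (Ne.symm hv_ne)
    intro h
    exact hva (σ.injective h)
  have t1 : dist (p x) (p a) ≤ dist (p x) (p u) + dist (p u) (p a) := dist_triangle _ _ _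
  have t2 : dist (p (σ a)) (p (σ v)) ≤ dist (p (σ a)) (p v) + dist (p v) (p (σ v)) :=
    dist_triangle _ _ _
  have c1 : dist (p u) (p a) = dist (p a) (p u) := dist_comm _ _
  have c2 : dist (p (σ a)) (p v) = dist (p (σ a)) (p v) := rfl
  have c3 : dist (p (σ a)) (p a) = dist (p a) (p (σ a)) := dist_comm _ _
  have c4 : dist (p v) (p (σ a)) = dist (p (σ a)) (p v) := dist_comm _ _
  rw [hu, hv]
  linarith
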